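/- Let g : ℕ → [0,1] satisfy g(0) = 1 − λ and g(r) ≤ 1 − λ′ for all r ≥ 1, where λ, λ′ ∈ (0,1], and suppose (1−λ′) · ρ(A)² < 1 and 1 − λ′ < 1. With α_j = ∏_{l=1}^{j} g(l−1), β_j = α_j (1 − g(j)), c(q) = Tr(f^{q+1}(P̄₀)), and ν(i) = c(i) + ∑_{j=1}^∞ α_j c(i+j), the double series ∑_{i=1}^∞ β_i ν(i) converges (is finite). (Finiteness of the quantity D in the proof of Theorem 1, which establishes boundedness of expected first passage costs and hence existence of a stabilizing stationary deterministic optimal policy.) -/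

import Mathlib

open Matrix

/-- The Riccati-type operator `f(X) = A X Aᵀ + Q`. -/
def fop {n : ℕ} (A Q : Matrix (Fin n) (Fin n) ℝ) (X : Matrix (Fin n) (Fin n) ℝ) :
    Matrix (Fin n) (Fin n) ℝ :=
  A * X * Aᵀ + Q

/-- The spectral radius of a real square matrix: the maximum modulus of its
(complex) eigenvalues. -/
noncomputable def rho {n : ℕ} (A : Matrix (Fin n) (Fin n) ℝ) : ℝ :=
  sSup ((fun z : ℂ => ‖z‖) '' spectrum ℂ (A.map Complex.ofReal))

section SqrtAux
open scoped MatrixOrder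

lemma psd_sqrt_aux {d : ℕ} {X : Matrix (Fin d) (Fin d) ℝ} (hX : X.PosSemidef) :
    ∃ S : Matrix (Fin d) (Fin d) ℝ, S * S = X ∧ Sᵀ = S := by
  have h0 : 0 ≤ X := Matrix.nonneg_iff_posSemidef.mpr hX
  refine ⟨CFC.sqrt X, CFC.sqrt_mul_sqrt_self X h0, ?_⟩
  have h1 := (Matrix.nonneg_iff_posSemidef.mp (CFC.sqrt_nonneg X)).1
  rw [← Matrix.conjTranspose_eq_transpose_of_trivial]; exact h1

end SqrtAux

namespace DAux

attribute [local instance] Matrix.frobeniusNormedAddCommGroup Matrix.frobeniusNormedRing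
  Matrix.frobeniusNormedAlgebra Matrix.frobeniusNormedSpace

lemma trace_mul_transpose_self_eq {d : ℕ} (N : Matrix (Fin d) (Fin d) ℝ) :
    (N * Nᵀ).trace = ‖N‖ ^ 2 := by
  have h1 : (N * Nᵀ).trace = ∑ i, ∑ j, ‖N i j‖ ^ (2 : ℝ) := by
    simp [Matrix.trace, Matrix.diag, Matrix.mul_apply, Matrix.transpose_apply,
      Real.rpow_two, Real.norm_eq_abs, sq_abs, sq]
  have hnn : (0:ℝ) ≤ ∑ i, ∑ j, ‖N i j‖ ^ (2 : ℝ) := by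
    positivity
  rw [h1, Matrix.frobenius_norm_def, ← Real.rpow_natCast _ 2, ← Real.rpow_mul hnn]
  norm_num

lemma psd_trace_nonneg {d : ℕ} {X : Matrix (Fin d) (Fin d) ℝ} (hX : X.PosSemidef) :
    0 ≤ X.trace := by
  obtain ⟨S, hs, ht⟩ := psd_sqrt_aux hX
  calc (0:ℝ) ≤ ‖S‖ ^ 2 := by positivity
    _ = (S * Sᵀ).trace := (trace_mul_transpose_self_eq _).symm
    _ = X.trace := by rw [ht, hs]

lemma trace_conj_le {d : ℕ} (M : Matrix (Fin d) (Fin d) ℝ) {X : Matrix (Fin d) (Fin d) ℝ}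
    (hX : X.PosSemidef) : (M * X * Mᵀ).trace ≤ ‖M‖ ^ 2 * X.trace := by
  obtain ⟨S, hs, ht⟩ := psd_sqrt_aux hX
  have h1 : M * X * Mᵀ = (M * S) * (M * S)ᵀ := by
    rw [Matrix.transpose_mul, ht, ← hs]; noncomm_ring
  have h2 : X.trace = ‖S‖ ^ 2 := by
    calc X.trace = (S * Sᵀ).trace := by rw [ht, hs]
      _ = ‖S‖ ^ 2 := trace_mul_transpose_self_eq _
  rw [h1, trace_mul_transpose_self_eq, h2, ← mul_pow]
  exact pow_le_pow_left₀ (norm_nonneg _) (Matrix.frobenius_norm_mul M S) 2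

lemma fop_iterate {d : ℕ} (A Q : Matrix (Fin d) (Fin d) ℝ) (n : ℕ)
    (P0 : Matrix (Fin d) (Fin d) ℝ) :
    (fop A Q)^[n] P0 =
      A ^ n * P0 * (A ^ n)ᵀ + ∑ k ∈ Finset.range n, A ^ k * Q * (A ^ k)ᵀ := by
  induction n generalizing P0 with
  | zero => simp
  | succ n ih =>
    rw [Function.iterate_succ_apply, ih, Finset.sum_range_succ]
    simp only [fop, pow_succ, Matrix.transpose_mul, Matrix.mul_add, Matrix.add_mul,
      Matrix.mul_assoc]
    abel

lemma fop_iterate_psd {d : ℕ} {A Q P0 : Matrix (Fin d) (Fin d) ℝ}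
    (hQ : Q.PosSemidef) (hP0 : P0.PosSemidef) (n : ℕ) :
    ((fop A Q)^[n] P0).PosSemidef := by
  induction n with
  | zero => simpa
  | succ n ih =>
    rw [Function.iterate_succ_apply']
    refine Matrix.PosSemidef.add ?_ hQ
    have := ih.mul_mul_conjTranspose_same A
    rwa [Matrix.conjTranspose_eq_transpose_of_trivial] at this

lemma rho_nonneg {d : ℕ} (A : Matrix (Fin d) (Fin d) ℝ) : 0 ≤ rho A :=
  Real.sSup_nonneg (by rintro x ⟨z, _, rfl⟩; exact norm_nonneg z)

lemma gelfand_bound {d : ℕ} (A : Matrix (Fin d) (Fin d) ℝ) {s : ℝ} (hs : rho A < s) :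
    ∃ C : ℝ, 0 < C ∧ ∀ n : ℕ, ‖A ^ n‖ ≤ C * s ^ n := by
  have hs0 : 0 < s := lt_of_le_of_lt (rho_nonneg A) hs
  set B : Matrix (Fin d) (Fin d) ℂ := A.map Complex.ofReal with hB
  have hBpow : ∀ n : ℕ, B ^ n = (A ^ n).map Complex.ofReal := by
    intro n
    exact (map_pow (Complex.ofRealHom.mapMatrix (m := Fin d)) A n).symm
  have hnorm : ∀ n : ℕ, ‖B ^ n‖ = ‖A ^ n‖ := by
    intro n
    rw [hBpow]
    exact Matrix.frobenius_norm_map_eq (A ^ n) _ (fun a => Complex.norm_real a)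
  have hsr : spectralRadius ℂ B < ENNReal.ofReal s := by
    have h1 : spectralRadius ℂ B ≤ ENNReal.ofReal (rho A) := by
      rw [spectralRadius]
      refine iSup₂_le fun k hk => ?_
      have hfin : ((fun z : ℂ => ‖z‖) '' spectrum ℂ B).Finite :=
        (Matrix.finite_spectrum B).image _
      have habs : ‖k‖ ≤ rho A :=
        le_csSup hfin.bddAbove ⟨k, hk, rfl⟩
      rw [← ENNReal.ofReal_coe_nnreal, coe_nnnorm]
      exact ENNReal.ofReal_le_ofReal (by exact habs)
    exact h1.trans_lt ((ENNReal.ofReal_lt_ofReal_iff hs0).mpr hs)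
  have hT := spectrum.pow_norm_pow_one_div_tendsto_nhds_spectralRadius B
  have hev := hT.eventually_lt_const hsr
  rw [Filter.eventually_atTop] at hev
  obtain ⟨N, hN⟩ := hev
  set N' := max N 1 with hN'
  have hbig : ∀ n ≥ N', ‖A ^ n‖ ≤ s ^ n := by
    intro n hn
    have hn1 : 1 ≤ n := le_trans (le_max_right N 1) hn
    have hnN : N ≤ n := le_trans (le_max_left N 1) hn
    have h := hN n hnN
    rw [ENNReal.ofReal_lt_ofReal_iff hs0] at h
    have hx : ‖B ^ n‖ = (‖B ^ n‖ ^ ((1 : ℝ) / n)) ^ (n : ℕ) := by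
      rw [← Real.rpow_natCast (‖B ^ n‖ ^ ((1:ℝ)/n)) n, ← Real.rpow_mul (norm_nonneg _),
        one_div, inv_mul_cancel₀ (by exact_mod_cast Nat.one_le_iff_ne_zero.mp hn1),
        Real.rpow_one]
    rw [← hnorm, hx]
    exact pow_le_pow_left₀ (Real.rpow_nonneg (norm_nonneg _) _) h.le n
  refine ⟨1 + ∑ k ∈ Finset.range N', ‖A ^ k‖ / s ^ k, by positivity, fun n => ?_⟩
  rcases le_or_gt N' n with h | h
  · calc ‖A ^ n‖ ≤ s ^ n := hbig n h
      _ ≤ (1 + ∑ k ∈ Finset.range N', ‖A ^ k‖ / s ^ k) * s ^ n := by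
          refine le_mul_of_one_le_left (by positivity) ?_
          have : (0:ℝ) ≤ ∑ k ∈ Finset.range N', ‖A ^ k‖ / s ^ k := by positivity
          linarith
  · have hmem : n ∈ Finset.range N' := Finset.mem_range.mpr h
    have hle : ‖A ^ n‖ / s ^ n ≤ ∑ k ∈ Finset.range N', ‖A ^ k‖ / s ^ k :=
      Finset.single_le_sum (f := fun k => ‖A ^ k‖ / s ^ k) (fun k _ => by positivity) hmem
    have hsn : (0:ℝ) < s ^ n := by positivity
    calc ‖A ^ n‖ = (‖A ^ n‖ / s ^ n) * s ^ n := by field_simp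
      _ ≤ (1 + ∑ k ∈ Finset.range N', ‖A ^ k‖ / s ^ k) * s ^ n := by
          refine mul_le_mul_of_nonneg_right ?_ hsn.le
          linarith

lemma trace_iterate_le {d : ℕ} (A : Matrix (Fin d) (Fin d) ℝ)
    {Q P0 : Matrix (Fin d) (Fin d) ℝ} (hQ : Q.PosSemidef) (hP0 : P0.PosSemidef)
    {r C : ℝ} (hr : 1 < r) (hC0 : 0 < C)
    (hC : ∀ n : ℕ, ‖A ^ n‖ ≤ C * Real.sqrt r ^ n) (n : ℕ) :
    ((fop A Q)^[n] P0).trace ≤ (C ^ 2 * (P0.trace + Q.trace / (r - 1))) * r ^ n := by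
  have hr0 : (0:ℝ) ≤ r := by linarith
  have hsq : Real.sqrt r ^ 2 = r := Real.sq_sqrt hr0
  have hpow : ∀ k : ℕ, ‖A ^ k‖ ^ 2 ≤ C ^ 2 * r ^ k := by
    intro k
    calc ‖A ^ k‖ ^ 2 ≤ (C * Real.sqrt r ^ k) ^ 2 :=
        pow_le_pow_left₀ (norm_nonneg _) (hC k) 2
      _ = C ^ 2 * r ^ k := by
        rw [mul_pow, ← pow_mul, mul_comm k 2, pow_mul, hsq]
  have hQt : 0 ≤ Q.trace := psd_trace_nonneg hQ
  have hPt : 0 ≤ P0.trace := psd_trace_nonneg hP0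
  have hrn : (0:ℝ) < r ^ n := by positivity
  rw [fop_iterate, Matrix.trace_add, Matrix.trace_sum]
  have h1 : (A ^ n * P0 * (A ^ n)ᵀ).trace ≤ C ^ 2 * r ^ n * P0.trace :=
    (trace_conj_le _ hP0).trans (mul_le_mul_of_nonneg_right (hpow n) hPt)
  have h2 : ∑ k ∈ Finset.range n, (A ^ k * Q * (A ^ k)ᵀ).trace ≤
      ∑ k ∈ Finset.range n, C ^ 2 * r ^ k * Q.trace :=
    Finset.sum_le_sum fun k _ =>
      (trace_conj_le _ hQ).trans (mul_le_mul_of_nonneg_right (hpow k) hQt)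
  have h3 : ∑ k ∈ Finset.range n, C ^ 2 * r ^ k * Q.trace =
      C ^ 2 * Q.trace * ((r ^ n - 1) / (r - 1)) := by
    calc ∑ k ∈ Finset.range n, C ^ 2 * r ^ k * Q.trace
        = C ^ 2 * Q.trace * ∑ k ∈ Finset.range n, r ^ k := by
          rw [Finset.mul_sum]
          exact Finset.sum_congr rfl fun k _ => by ring
      _ = C ^ 2 * Q.trace * ((r ^ n - 1) / (r - 1)) := by rw [geom_sum_eq hr.ne' n]
  have h4 : C ^ 2 * Q.trace * ((r ^ n - 1) / (r - 1)) ≤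
      C ^ 2 * Q.trace * (r ^ n / (r - 1)) := by
    refine mul_le_mul_of_nonneg_left ?_ (by positivity)
    gcongr
    · linarith
  calc (A ^ n * P0 * (A ^ n)ᵀ).trace + ∑ k ∈ Finset.range n, (A ^ k * Q * (A ^ k)ᵀ).trace
      ≤ C ^ 2 * r ^ n * P0.trace + C ^ 2 * Q.trace * (r ^ n / (r - 1)) :=
        add_le_add h1 ((h2.trans_eq h3).trans h4)
    _ = (C ^ 2 * (P0.trace + Q.trace / (r - 1))) * r ^ n := by ring

end DAux

open DAux in
/-- Finiteness of the quantity `D = ∑_{i=1}^∞ β_i ν(i)` in the proof of Theorem 1, where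
`α_j = ∏_{l=1}^{j} g(l−1)`, `β_j = α_j (1 − g(j))`, `c(q) = Tr(f^{q+1}(P̄₀))` and
`ν(i) = c(i) + ∑_{j=1}^∞ α_j c(i+j)`.  (The series are reindexed: the summand at `i` is
`β_{i+1} ν(i+1)`, and inside `ν`, the summand at `j` is `α_{j+1} c(i+1+j+1)`.) -/
theorem D_summable {d : ℕ} (A Q P0 : Matrix (Fin d) (Fin d) ℝ)
    (hQ : Q.PosSemidef) (hP0 : P0.PosSemidef)
    (g : ℕ → ℝ) (lam lam' : ℝ)
    (hlam : lam ∈ Set.Ioc (0 : ℝ) 1) (hlam' : lam' ∈ Set.Ioc (0 : ℝ) 1)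
    (hg : ∀ r : ℕ, g r ∈ Set.Icc (0 : ℝ) 1)
    (hg0 : g 0 = 1 - lam) (hgr : ∀ r : ℕ, 1 ≤ r → g r ≤ 1 - lam')
    (hstab : (1 - lam') * (rho A) ^ 2 < 1) (hlt : 1 - lam' < 1) :
    Summable (fun i : ℕ =>
      ((∏ l ∈ Finset.range (i + 1), g l) * (1 - g (i + 1))) *
        (((fop A Q)^[i + 2] P0).trace +
          ∑' j : ℕ, (∏ l ∈ Finset.range (j + 1), g l) * ((fop A Q)^[i + j + 3] P0).trace)) := by
  classical
  -- set up parameters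
  set m : ℝ := max ((rho A) ^ 2) 1 with hm
  have hm1 : (1:ℝ) ≤ m := le_max_right _ _
  have hm0 : (0:ℝ) < m := by linarith
  set q : ℝ := max (1 - lam') (1 / (2 * m)) with hq
  have hq0 : (0:ℝ) < q := lt_of_lt_of_le (by positivity) (le_max_right _ _)
  have hqm : q * m < 1 := by
    have h1 : (1 - lam') * m < 1 := by
      rcases max_cases ((rho A) ^ 2) 1 with ⟨h, _⟩ | ⟨h, _⟩ <;> rw [hm, h]
      · exact hstab
      · simpa using hlt
    have h2 : (1 / (2 * m)) * m < 1 := by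
      have : (1 / (2 * m)) * m = 1 / 2 := by field_simp
      rw [this]; norm_num
    have : q * m = max ((1 - lam') * m) ((1 / (2 * m)) * m) := max_mul_of_nonneg _ _ hm0.le
    rw [this]
    exact max_lt h1 h2
  have hq1 : q < 1 := by nlinarith
  set r : ℝ := (m + 1 / q) / 2 with hr
  have hmq : m < 1 / q := by
    rw [lt_div_iff₀ hq0]; nlinarith
  have hrm : m < r := by rw [hr]; linarith
  have hr1 : (1:ℝ) < r := lt_of_le_of_lt hm1 hrm
  have hr0 : (0:ℝ) < r := by linarith
  have hqr : q * r < 1 := by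
    have hrlt : r < 1 / q := by rw [hr]; linarith
    calc q * r < q * (1 / q) := by exact mul_lt_mul_of_pos_left hrlt hq0
      _ = 1 := by field_simp
  have hqr0 : (0:ℝ) ≤ q * r := by positivity
  -- Gelfand bound
  have hrho : rho A < Real.sqrt r := by
    have h1 : (rho A) ^ 2 < r := lt_of_le_of_lt (le_max_left _ _) hrm
    have h2 := Real.sqrt_lt_sqrt (sq_nonneg _) h1
    rwa [Real.sqrt_sq (rho_nonneg A)] at h2
  obtain ⟨C, hC0, hC⟩ := gelfand_bound A hrho
  set K : ℝ := C ^ 2 * (P0.trace + Q.trace / (r - 1)) with hK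
  have hKr : ∀ n : ℕ, ((fop A Q)^[n] P0).trace ≤ K * r ^ n :=
    fun n => trace_iterate_le A hQ hP0 hr1 hC0 hC n
  have hK0 : (0:ℝ) ≤ K := by
    have h1 := psd_trace_nonneg hP0
    have h2 := psd_trace_nonneg hQ
    have : (0:ℝ) ≤ Q.trace / (r - 1) := div_nonneg h2 (by linarith)
    positivity
  -- alpha bounds
  have halpha_nonneg : ∀ j : ℕ, 0 ≤ ∏ l ∈ Finset.range (j + 1), g l :=
    fun j => Finset.prod_nonneg fun l _ => (hg l).1
  have hgq : ∀ l : ℕ, g (l + 1) ≤ q :=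
    fun l => (hgr (l + 1) (by omega)).trans (le_max_left _ _)
  have halpha : ∀ j : ℕ, ∏ l ∈ Finset.range (j + 1), g l ≤ q ^ j := by
    intro j
    rw [Finset.prod_range_succ']
    have h1 : ∏ l ∈ Finset.range j, g (l + 1) ≤ q ^ j := by
      calc ∏ l ∈ Finset.range j, g (l + 1) ≤ ∏ _l ∈ Finset.range j, q :=
          Finset.prod_le_prod (fun l _ => (hg _).1) (fun l _ => hgq l)
        _ = q ^ j := by simp
    calc (∏ l ∈ Finset.range j, g (l + 1)) * g 0 ≤ q ^ j * 1 :=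
        mul_le_mul h1 (hg 0).2 (hg 0).1 (by positivity)
      _ = q ^ j := mul_one _
  have hc0 : ∀ n : ℕ, 0 ≤ ((fop A Q)^[n] P0).trace :=
    fun n => psd_trace_nonneg (fop_iterate_psd hQ hP0 n)
  -- inner sum bound
  have hgeom : Summable (fun j : ℕ => (q * r) ^ j) :=
    summable_geometric_of_lt_one hqr0 hqr
  have hinner_le : ∀ i : ℕ,
      (∑' j : ℕ, (∏ l ∈ Finset.range (j + 1), g l) * ((fop A Q)^[i + j + 3] P0).trace)
        ≤ K * r ^ (i + 3) * (1 - q * r)⁻¹ := by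
    intro i
    have hmaj : Summable (fun j : ℕ => (K * r ^ (i + 3)) * (q * r) ^ j) := hgeom.mul_left _
    have hle : ∀ j : ℕ,
        (∏ l ∈ Finset.range (j + 1), g l) * ((fop A Q)^[i + j + 3] P0).trace
          ≤ (K * r ^ (i + 3)) * (q * r) ^ j := by
      intro j
      calc (∏ l ∈ Finset.range (j + 1), g l) * ((fop A Q)^[i + j + 3] P0).trace
          ≤ q ^ j * (K * r ^ (i + j + 3)) :=
            mul_le_mul (halpha j) (hKr (i + j + 3)) (hc0 _) (pow_nonneg hq0.le j)
        _ = (K * r ^ (i + 3)) * (q * r) ^ j := by rw [mul_pow]; ring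
    have hfsum : Summable (fun j : ℕ =>
        (∏ l ∈ Finset.range (j + 1), g l) * ((fop A Q)^[i + j + 3] P0).trace) :=
      Summable.of_nonneg_of_le (fun j => mul_nonneg (halpha_nonneg j) (hc0 _)) hle hmaj
    calc (∑' j : ℕ, (∏ l ∈ Finset.range (j + 1), g l) * ((fop A Q)^[i + j + 3] P0).trace)
        ≤ ∑' j : ℕ, (K * r ^ (i + 3)) * (q * r) ^ j := Summable.tsum_le_tsum hle hfsum hmaj
      _ = K * r ^ (i + 3) * (1 - q * r)⁻¹ := by
          rw [tsum_mul_left, tsum_geometric_of_lt_one hqr0 hqr]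
  -- final comparison
  refine Summable.of_nonneg_of_le ?_ ?_
    ((hgeom.mul_left (K * r ^ 2 + K * r ^ 3 * (1 - q * r)⁻¹)) :
      Summable (fun i : ℕ => (K * r ^ 2 + K * r ^ 3 * (1 - q * r)⁻¹) * (q * r) ^ i))
  · intro i
    refine mul_nonneg (mul_nonneg (halpha_nonneg i) ?_) ?_
    · linarith [(hg (i + 1)).2]
    · exact add_nonneg (hc0 _)
        (tsum_nonneg fun j => mul_nonneg (halpha_nonneg j) (hc0 _))
  · intro i
    have hβ : (∏ l ∈ Finset.range (i + 1), g l) * (1 - g (i + 1)) ≤ q ^ i := by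
      calc (∏ l ∈ Finset.range (i + 1), g l) * (1 - g (i + 1)) ≤ q ^ i * 1 :=
          mul_le_mul (halpha i) (by linarith [(hg (i + 1)).1])
            (by linarith [(hg (i + 1)).2]) (pow_nonneg hq0.le i)
        _ = q ^ i := mul_one _
    have hν0 : 0 ≤ ((fop A Q)^[i + 2] P0).trace +
        ∑' j : ℕ, (∏ l ∈ Finset.range (j + 1), g l) * ((fop A Q)^[i + j + 3] P0).trace :=
      add_nonneg (hc0 _) (tsum_nonneg fun j => mul_nonneg (halpha_nonneg j) (hc0 _))
    have hν : ((fop A Q)^[i + 2] P0).trace +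
        (∑' j : ℕ, (∏ l ∈ Finset.range (j + 1), g l) * ((fop A Q)^[i + j + 3] P0).trace)
          ≤ K * r ^ (i + 2) + K * r ^ (i + 3) * (1 - q * r)⁻¹ :=
      add_le_add (hKr (i + 2)) (hinner_le i)
    calc ((∏ l ∈ Finset.range (i + 1), g l) * (1 - g (i + 1))) *
          (((fop A Q)^[i + 2] P0).trace +
            ∑' j : ℕ, (∏ l ∈ Finset.range (j + 1), g l) * ((fop A Q)^[i + j + 3] P0).trace)
        ≤ q ^ i * (K * r ^ (i + 2) + K * r ^ (i + 3) * (1 - q * r)⁻¹) :=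
          mul_le_mul hβ hν hν0 (pow_nonneg hq0.le i)
      _ = (K * r ^ 2 + K * r ^ 3 * (1 - q * r)⁻¹) * (q * r) ^ i := by
          rw [mul_pow]; ring
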